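/- Let x ∈ ℝ³ with ‖x‖ = x₁²+x₂²+x₃² ≤ 1, and let ρ̃ = (1/4)·(I₄ + (2/3)·Σᵢ xᵢ(σᵢ⊗I₂ + I₂⊗σᵢ) + (1/3)·Σⱼ σⱼ⊗σⱼ). Then the partial transpose ρ̃^{T₂} is positive semidefinite (equivalently, ρ̃ is separable) if and only if ‖x‖ ≤ 3/4 and ‖x‖ ≤ 1 + x₃ + x₃². -/

import Mathlib

open Matrix Kronecker
open scoped ComplexOrder

/-- The three Pauli matrices. -/
noncomputable def pauli : Fin 3 → Matrix (Fin 2) (Fin 2) ℂ :=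
  ![!![0, 1; 1, 0], !![0, -Complex.I; Complex.I, 0], !![1, 0; 0, -1]]

/-- Partial transpose on the second qubit:
`(ρ^{T₂})_{(i,μ),(j,ν)} = ρ_{(i,ν),(j,μ)}`. -/
noncomputable def ptranspose (ρ : Matrix (Fin 2 × Fin 2) (Fin 2 × Fin 2) ℂ) :
    Matrix (Fin 2 × Fin 2) (Fin 2 × Fin 2) ℂ :=
  Matrix.of fun p q => ρ (p.1, q.2) (q.1, p.2)

/-- Explicit form of 12 times the partially transposed local output. -/
noncomputable def Qm (x : Fin 3 → ℝ) : Matrix (Fin 2 × Fin 2) (Fin 2 × Fin 2) ℂ :=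
  Matrix.of fun p q =>
    ![![ ![![4 + 4*(x 2:ℂ), 2*((x 0:ℂ) + (x 1:ℂ)*Complex.I)],
          ![2*((x 0:ℂ) - (x 1:ℂ)*Complex.I), 2]],
         ![![2*((x 0:ℂ) - (x 1:ℂ)*Complex.I), 2], ![0, 2*((x 0:ℂ) - (x 1:ℂ)*Complex.I)]] ],
      ![ ![![2*((x 0:ℂ) + (x 1:ℂ)*Complex.I), 0], ![2, 2*((x 0:ℂ) + (x 1:ℂ)*Complex.I)]],
         ![![2, 2*((x 0:ℂ) + (x 1:ℂ)*Complex.I)],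
          ![2*((x 0:ℂ) - (x 1:ℂ)*Complex.I), 4 - 4*(x 2:ℂ)]] ]] p.1 p.2 q.1 q.2

set_option maxHeartbeats 1000000 in
lemma ptranspose_eq (x : Fin 3 → ℝ) :
    ptranspose ((1/4 : ℂ) • ((1 : Matrix (Fin 2 × Fin 2) (Fin 2 × Fin 2) ℂ)
        + (2/3 : ℂ) • ∑ i : Fin 3, (x i : ℂ) • (pauli i ⊗ₖ 1 + 1 ⊗ₖ pauli i)
        + (1/3 : ℂ) • ∑ j : Fin 3, pauli j ⊗ₖ pauli j))
    = (1/12 : ℂ) • Qm x := by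
  ext ⟨i, μ⟩ ⟨j, ν⟩
  fin_cases i <;> fin_cases μ <;> fin_cases j <;> fin_cases ν <;>
  · simp only [ptranspose, Qm, Matrix.of_apply, Matrix.smul_apply, Matrix.add_apply,
      Matrix.sum_apply, Fin.sum_univ_three, Matrix.kroneckerMap_apply, Matrix.one_apply,
      smul_eq_mul, pauli, Matrix.cons_val_two, Matrix.tail_cons, Matrix.head_cons]
    norm_num [Prod.ext_iff]
    try ring

lemma key_helper (n e s1 s2 s3 : ℝ) (hn : 0 < n) (h2 : 0 ≤ 3-4*n)
    (hs1 : 0 ≤ s1) (hs2 : 0 ≤ s2) (hs3 : 0 ≤ s3)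
    (key : 6*n^2*e = 2*n^2*s1 + 2*n*(3-4*n)*s2 + 3*s3) : 0 ≤ e := by
  nlinarith [mul_pos hn hn, mul_nonneg (mul_nonneg (le_of_lt hn) h2) hs2,
    mul_nonneg (mul_nonneg (le_of_lt hn) (le_of_lt hn)) hs1]

set_option maxHeartbeats 2000000 in
lemma key_real (a b c r0 i0 r1 i1 r2 i2 r3 i3 : ℝ) (h : a^2+b^2+c^2 ≤ 3/4) :
    0 ≤ (2*(r0^2+i0^2+r1^2+i1^2+r2^2+i2^2+r3^2+i3^2) + 2*((r0+r3)^2+(i0+i3)^2) + 4*((r0+r3)*(c*r0 + a*r1 - b*i1 + a*r2 + b*i2 - c*r3)+(i0+i3)*(c*i0 + b*r1 + a*i1 + a*i2 - b*r2 - c*i3))) := by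
  have hn0 : 0 ≤ (a^2+b^2+c^2) := by positivity
  rcases hn0.lt_or_eq with hpos | hzero
  · refine key_helper (a^2+b^2+c^2) _ ((3*(r0+r3)+2*(c*r0 + a*r1 - b*i1 + a*r2 + b*i2 - c*r3))^2 + (3*(i0+i3)+2*(c*i0 + b*r1 + a*i1 + a*i2 - b*r2 - c*i3))^2) ((c*r0 + a*r1 - b*i1 + a*r2 + b*i2 - c*r3)^2+(c*i0 + b*r1 + a*i1 + a*i2 - b*r2 - c*i3)^2) ((2*(a^2+b^2+c^2)*r0 - (a^2+b^2+c^2)*(r0+r3) - c*(c*r0 + a*r1 - b*i1 + a*r2 + b*i2 - c*r3))^2 + (2*(a^2+b^2+c^2)*i0 - (a^2+b^2+c^2)*(i0+i3) - c*(c*i0 + b*r1 + a*i1 + a*i2 - b*r2 - c*i3))^2 + (2*(a^2+b^2+c^2)*r1 - (a*(c*r0 + a*r1 - b*i1 + a*r2 + b*i2 - c*r3) + b*(c*i0 + b*r1 + a*i1 + a*i2 - b*r2 - c*i3)))^2 + (2*(a^2+b^2+c^2)*i1 - (a*(c*i0 + b*r1 + a*i1 + a*i2 - b*r2 - c*i3)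 - b*(c*r0 + a*r1 - b*i1 + a*r2 + b*i2 - c*r3)))^2 + (2*(a^2+b^2+c^2)*r2 - (a*(c*r0 + a*r1 - b*i1 + a*r2 + b*i2 - c*r3) - b*(c*i0 + b*r1 + a*i1 + a*i2 - b*r2 - c*i3)))^2 + (2*(a^2+b^2+c^2)*i2 - (a*(c*i0 + b*r1 + a*i1 + a*i2 - b*r2 - c*i3) + b*(c*r0 + a*r1 - b*i1 + a*r2 + b*i2 - c*r3)))^2 + (2*(a^2+b^2+c^2)*r3 - (a^2+b^2+c^2)*(r0+r3) + c*(c*r0 + a*r1 - b*i1 + a*r2 + b*i2 - c*r3))^2 + (2*(a^2+b^2+c^2)*i3 - (a^2+b^2+c^2)*(i0+i3) + c*(c*i0 + b*r1 + a*i1 + a*i2 - b*r2 - c*i3))^2) hpos (by linarith) (by positivity) (by positivity)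
      (by positivity) (by ring)
  · have ha : a = 0 := by nlinarith [sq_nonneg a, sq_nonneg b, sq_nonneg c]
    have hb : b = 0 := by nlinarith [sq_nonneg a, sq_nonneg b, sq_nonneg c]
    have hc : c = 0 := by nlinarith [sq_nonneg a, sq_nonneg b, sq_nonneg c]
    subst ha hb hc
    nlinarith [sq_nonneg (r0+r3), sq_nonneg (i0+i3), sq_nonneg r0, sq_nonneg i0,
      sq_nonneg r1, sq_nonneg i1, sq_nonneg r2, sq_nonneg i2, sq_nonneg r3, sq_nonneg i3]

set_option maxHeartbeats 2000000 in
lemma Qm_hermitian (x : Fin 3 → ℝ) : ((1/12 : ℂ) • Qm x).IsHermitian := by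
  unfold Matrix.IsHermitian
  ext ⟨i, μ⟩ ⟨j, ν⟩
  fin_cases i <;> fin_cases μ <;> fin_cases j <;> fin_cases ν <;>
  · norm_num [Matrix.conjTranspose_apply, Matrix.smul_apply, Qm, Matrix.of_apply,
      smul_eq_mul, Complex.star_def, _root_.map_mul, _root_.map_add, map_sub, map_div₀,
      _root_.map_one, map_ofNat, Complex.conj_ofReal, Complex.conj_I]
    try ring

set_option maxHeartbeats 2000000 in
lemma Qm_form_nonneg (x : Fin 3 → ℝ) (h : x 0 ^ 2 + x 1 ^ 2 + x 2 ^ 2 ≤ 3/4)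
    (v : Fin 2 × Fin 2 → ℂ) : 0 ≤ star v ⬝ᵥ (Qm x) *ᵥ v := by
  have hk := key_real (x 0) (x 1) (x 2) (v (0,0)).re (v (0,0)).im (v (0,1)).re (v (0,1)).im
    (v (1,0)).re (v (1,0)).im (v (1,1)).re (v (1,1)).im h
  rw [Complex.le_def]
  constructor
  · simp only [dotProduct, Matrix.mulVec, Fintype.sum_prod_type, Fin.sum_univ_two,
      Qm, Matrix.of_apply, Pi.star_apply, Complex.star_def, Matrix.cons_val_zero,
      Matrix.cons_val_one, Matrix.head_cons, Complex.add_re, Complex.add_im, Complex.mul_re,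
      Complex.mul_im, Complex.sub_re, Complex.sub_im, Complex.ofReal_re, Complex.ofReal_im,
      Complex.I_re, Complex.I_im, Complex.conj_re, Complex.conj_im, Complex.zero_re,
      Complex.zero_im, Complex.re_ofNat, Complex.im_ofNat]
    linarith [hk]
  · simp only [dotProduct, Matrix.mulVec, Fintype.sum_prod_type, Fin.sum_univ_two,
      Qm, Matrix.of_apply, Pi.star_apply, Complex.star_def, Matrix.cons_val_zero,
      Matrix.cons_val_one, Matrix.head_cons, Complex.add_re, Complex.add_im, Complex.mul_re,
      Complex.mul_im, Complex.sub_re, Complex.sub_im, Complex.ofReal_re, Complex.ofReal_im,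
      Complex.I_re, Complex.I_im, Complex.conj_re, Complex.conj_im, Complex.zero_re,
      Complex.zero_im, Complex.re_ofNat, Complex.im_ofNat]
    ring

set_option maxHeartbeats 2000000 in
lemma Qm_forward (x : Fin 3 → ℝ)
    (hq : ∀ v : Fin 2 × Fin 2 → ℂ, 0 ≤ star v ⬝ᵥ (Qm x) *ᵥ v) :
    x 0 ^ 2 + x 1 ^ 2 + x 2 ^ 2 ≤ 3/4 := by
  set a := x 0; set b := x 1; set c := x 2
  have h := hq (fun p => ![![(c:ℂ) - 2*(((a^2+b^2+c^2 : ℝ)):ℂ)/3, (a:ℂ) - (b:ℂ)*Complex.I],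
    ![(a:ℂ) + (b:ℂ)*Complex.I, -(c:ℂ) - 2*(((a^2+b^2+c^2 : ℝ)):ℂ)/3]] p.1 p.2)
  rw [Complex.le_def] at h
  obtain ⟨h, -⟩ := h
  simp only [dotProduct, Matrix.mulVec, Fintype.sum_prod_type, Fin.sum_univ_two,
    Qm, Matrix.of_apply, Pi.star_apply, Complex.star_def, Matrix.cons_val_zero,
    Matrix.cons_val_one, Matrix.head_cons, Complex.add_re, Complex.add_im, Complex.mul_re,
    Complex.mul_im, Complex.sub_re, Complex.sub_im, Complex.neg_re, Complex.neg_im,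
    Complex.div_re, Complex.div_im, Complex.ofReal_re, Complex.ofReal_im, Complex.I_re, Complex.I_im, Complex.conj_re, Complex.conj_im,
    Complex.zero_re, Complex.zero_im, Complex.re_ofNat, Complex.im_ofNat,
    Complex.normSq_ofNat] at h
  nlinarith [h, sq_nonneg (a^2+b^2+c^2), sq_nonneg a, sq_nonneg b, sq_nonneg c]

/-- The local output `ρ̃₁₃ = {(2/3)x, (2/3)x, (1/3)I₃}` of the Buzek–Hillery
local optimal cloner has positive semidefinite partial transpose (equivalently, is separable)
iff `‖x‖ ≤ 3/4` and `‖x‖ ≤ 1 + x₃ + x₃²`, where `‖x‖ = x₁² + x₂² + x₃²`. -/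
theorem local_output_separability (x : Fin 3 → ℝ)
    (hx : x 0 ^ 2 + x 1 ^ 2 + x 2 ^ 2 ≤ 1) :
    (ptranspose ((1/4 : ℂ) • ((1 : Matrix (Fin 2 × Fin 2) (Fin 2 × Fin 2) ℂ)
        + (2/3 : ℂ) • ∑ i : Fin 3, (x i : ℂ) • (pauli i ⊗ₖ 1 + 1 ⊗ₖ pauli i)
        + (1/3 : ℂ) • ∑ j : Fin 3, pauli j ⊗ₖ pauli j))).PosSemidef
    ↔ (x 0 ^ 2 + x 1 ^ 2 + x 2 ^ 2 ≤ 3/4 ∧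
       x 0 ^ 2 + x 1 ^ 2 + x 2 ^ 2 ≤ 1 + x 2 + x 2 ^ 2) := by
  rw [ptranspose_eq]
  rw [Matrix.posSemidef_iff_dotProduct_mulVec]
  constructor
  · rintro ⟨-, hq⟩
    have hq' : ∀ v : Fin 2 × Fin 2 → ℂ, 0 ≤ star v ⬝ᵥ (Qm x) *ᵥ v := by
      intro v
      have h := hq v
      rw [Matrix.smul_mulVec, dotProduct_smul, smul_eq_mul] at h
      have h12 : (0:ℂ) ≤ 12 := by
        rw [Complex.le_def]; norm_num
      have heq : star v ⬝ᵥ Qm x *ᵥ v = 12 * (1/12 * (star v ⬝ᵥ Qm x *ᵥ v)) := by ring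
      rw [heq]
      exact mul_nonneg h12 h
    have h34 := Qm_forward x hq'
    refine ⟨h34, ?_⟩
    nlinarith [sq_nonneg (x 2 + 1/2)]
  · rintro ⟨h34, -⟩
    refine ⟨Qm_hermitian x, fun v => ?_⟩
    rw [Matrix.smul_mulVec, dotProduct_smul, smul_eq_mul]
    have h12 : (0:ℂ) ≤ 1/12 := by
      rw [Complex.le_def]; norm_num
    exact mul_nonneg h12 (Qm_form_nonneg x h34 v)
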